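/- arXiv:1705.01586 — 4 statements merged into one kernel-verified Lean document; each statement's English description precedes it below -/
import Mathlib

section
/- Let H be a group such that the power graph P(H) is isomorphic to the power graph P(ℤ) of the additive group of integers. Then H is isomorphic (as a group) to ℤ; moreover, every graph isomorphism f : P(ℤ) → P(H) is also an isomorphism of directed power graphs, i.e. for all x, y ∈ ℤ there is an arc x → y in the directed power graph of ℤ if and only if there is an arc f(x) → f(y) in the directed power graph of H. -/
/-- The power graph of a group `G`: distinct `x, y` are adjacent iff one is a
nonzero integer power of the other. -/
def powerGraph (G : Type*) [Group G] : SimpleGraph G where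
  Adj x y := x ≠ y ∧ ∃ n : ℤ, n ≠ 0 ∧ (y = x ^ n ∨ x = y ^ n)
  symm := by
    constructor; rintro x y ⟨hxy, n, hn, h⟩
    exact ⟨hxy.symm, n, hn, h.symm⟩
  loopless := by constructor; rintro x ⟨h, -⟩; exact h rfl

/-- There is an arc `x → y` in the directed power graph iff `x ≠ y` and `y` is a
nonzero integer power of `x`. -/
def powArc {G : Type*} [Group G] (x y : G) : Prop :=
  x ≠ y ∧ ∃ n : ℤ, n ≠ 0 ∧ y = x ^ n
/-- The power graph of an additive group `G`: distinct `x, y` are adjacent iff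
one is a nonzero integer multiple of the other. -/
def addPowerGraph (G : Type*) [AddGroup G] : SimpleGraph G where
  Adj x y := x ≠ y ∧ ∃ n : ℤ, n ≠ 0 ∧ (y = n • x ∨ x = n • y)
  symm := by
    constructor; rintro x y ⟨hxy, n, hn, h⟩
    exact ⟨hxy.symm, n, hn, h.symm⟩
  loopless := by constructor; rintro x ⟨h, -⟩; exact h rfl

/-- There is an arc `x → y` in the directed power graph of an additive group iff
`x ≠ y` and `y` is a nonzero integer multiple of `x`. -/
def addPowArc {G : Type*} [AddGroup G] (x y : G) : Prop :=
  x ≠ y ∧ ∃ n : ℤ, n ≠ 0 ∧ y = n • x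

namespace PowZAux

section ZSide
variable {x y m : ℤ}

lemma intAbs_pow_dvd {p k : ℕ} {m : ℤ} : (p:ℤ)^k ∣ m ↔ p ^ k ∣ m.natAbs := by
  rw [← Int.natAbs_dvd_natAbs, Int.natAbs_pow, Int.natAbs_natCast]

lemma dvd_intAbs_pow {p k : ℕ} {m : ℤ} : m ∣ (p:ℤ)^k ↔ m.natAbs ∣ p ^ k := by
  rw [← Int.natAbs_dvd_natAbs, Int.natAbs_pow, Int.natAbs_natCast]

lemma adjZ_iff (x y : ℤ) : (addPowerGraph ℤ).Adj x y ↔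
    x ≠ y ∧ x ≠ 0 ∧ y ≠ 0 ∧ (x ∣ y ∨ y ∣ x) := by
  constructor
  · rintro ⟨hne, n, hn, h | h⟩
    · subst h
      rw [zsmul_eq_mul] at *
      have hx : x ≠ 0 := by rintro rfl; simp at hne
      exact ⟨hne, hx, mul_ne_zero hn hx, Or.inl ⟨n, by simp [mul_comm]⟩⟩
    · subst h
      rw [zsmul_eq_mul] at *
      have hy : y ≠ 0 := by rintro rfl; simp at hne
      exact ⟨hne, mul_ne_zero hn hy, hy, Or.inr ⟨n, by simp [mul_comm]⟩⟩
  · rintro ⟨hne, hx, hy, h | ⟨c, rfl⟩⟩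
    · obtain ⟨c, rfl⟩ := h
      refine ⟨hne, c, ?_, Or.inl (by simp [zsmul_eq_mul, mul_comm])⟩
      rintro rfl; simp at hy
    · refine ⟨hne, c, ?_, Or.inr (by simp [zsmul_eq_mul, mul_comm])⟩
      rintro rfl; simp at hx

/-- closed neighborhood membership -/
def Nbr (x z : ℤ) : Prop := (addPowerGraph ℤ).Adj x z ∨ z = x

lemma nbr_iff {x : ℤ} (hx : x ≠ 0) (z : ℤ) : Nbr x z ↔ z ≠ 0 ∧ (x ∣ z ∨ z ∣ x) := by
  unfold Nbr
  rw [adjZ_iff]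
  constructor
  · rintro (⟨-, -, hz, h⟩ | rfl)
    · exact ⟨hz, h⟩
    · exact ⟨hx, Or.inl dvd_rfl⟩
  · rintro ⟨hz, h⟩
    by_cases hzx : z = x
    · exact Or.inr hzx
    · exact Or.inl ⟨fun e => hzx e.symm, hx, hz, h⟩

def Rr (x y : ℤ) : Prop := ∀ z, Nbr y z → Nbr x z

lemma rr_dvd {x y : ℤ} (hx : x ≠ 0) (hy : y ≠ 0) (h : Rr x y) : x ∣ y := by
  -- use two large primes
  obtain ⟨p, hp_ge, hp⟩ := Nat.exists_infinite_primes (x.natAbs + 1)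
  obtain ⟨q, hq_ge, hq⟩ := Nat.exists_infinite_primes (p + 1)
  have hdvd : ∀ r : ℕ, r.Prime → x.natAbs + 1 ≤ r → x ∣ y * r := by
    intro r hr hge
    have hz : Nbr x (y * r) := h _ ((nbr_iff hy _).mpr
      ⟨mul_ne_zero hy (by exact_mod_cast hr.ne_zero), Or.inl ⟨r, rfl⟩⟩)
    rcases (nbr_iff hx _).mp hz with ⟨-, hcomp | hcomp⟩
    · exact hcomp
    · exfalso
      have h1 : (y * r).natAbs ∣ x.natAbs := Int.natAbs_dvd_natAbs.mpr hcomp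
      have h2 : (y * r).natAbs ≤ x.natAbs := Nat.le_of_dvd (by positivity) h1
      have h3 : r ≤ (y * r).natAbs := by
        rw [Int.natAbs_mul]
        simpa using Nat.le_mul_of_pos_left r (Int.natAbs_pos.mpr hy)
      omega
  have hxp := hdvd p hp hp_ge
  have hxq := hdvd q hq (by omega)
  have hco : IsCoprime (p : ℤ) (q : ℤ) := by
    rw [Int.isCoprime_iff_gcd_eq_one]
    have : Nat.Coprime p q := (Nat.coprime_primes hp hq).mpr (by omega)
    simpa [Int.gcd_natCast_natCast] using this
  obtain ⟨a, b, hab⟩ := hco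
  have hy' : a * (y * p) + b * (y * q) = y := by
    calc a * (y * p) + b * (y * q) = y * (a * p + b * q) := by ring
    _ = y := by rw [hab, mul_one]
  rw [← hy']
  exact dvd_add (Dvd.dvd.mul_left hxp a) (Dvd.dvd.mul_left hxq b)


lemma nbr_self (x : ℤ) : Nbr x x := Or.inr rfl

lemma rr_iff (hx : x ≠ 0) (hy : y ≠ 0) :
    Rr x y ↔ x ∣ y ∧ ∀ d : ℤ, d ≠ 0 → d ∣ y → (x ∣ d ∨ d ∣ x) := by
  constructor
  · intro h
    refine ⟨rr_dvd hx hy h, fun d hd hdy => ?_⟩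
    exact ((nbr_iff hx d).mp (h d ((nbr_iff hy d).mpr ⟨hd, Or.inr hdy⟩))).2
  · rintro ⟨hxy, hcomp⟩ z hz
    rcases (nbr_iff hy z).mp hz with ⟨hz0, hyz | hzy⟩
    · exact (nbr_iff hx z).mpr ⟨hz0, Or.inl (hxy.trans hyz)⟩
    · exact (nbr_iff hx z).mpr ⟨hz0, hcomp z hz0 hzy⟩

lemma rr_of_dvd_dvd (hx : x ≠ 0) (hy : y ≠ 0) (hxy : x ∣ y) (hyx : y ∣ x) : Rr x y :=
  (rr_iff hx hy).mpr ⟨hxy, fun d _ hdy => Or.inr (hdy.trans hyx)⟩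


lemma rr_zero (hx : x ≠ 0) : ¬ Rr x 0 := fun h =>
  (((nbr_iff hx 0).mp (h 0 (nbr_self 0))).1) rfl

lemma rr_one (hx : x ≠ 0) : Rr x 1 ↔ x ∣ 1 := by
  constructor
  · exact fun h => rr_dvd hx one_ne_zero h
  · intro h1
    exact (rr_iff hx one_ne_zero).mpr ⟨h1, fun d hd hd1 => Or.inr (hd1.trans (one_dvd x))⟩

/-- prime power predicate -/
def PPz (x : ℤ) : Prop := IsPrimePow x.natAbs

lemma pp_char (hx : x ≠ 0) (hx1 : ¬ x ∣ 1) :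
    (∃ m, Rr x m ∧ ¬ Rr m x) ↔ PPz x := by
  constructor
  · rintro ⟨m, hxm, hmx⟩
    have hm : m ≠ 0 := by rintro rfl; exact rr_zero hx hxm
    obtain ⟨hdvd, hcomp⟩ := (rr_iff hx hm).mp hxm
    have hnmx : ¬ m ∣ x := fun hd => hmx (rr_of_dvd_dvd hm hx hd hdvd)
    -- show m.natAbs ∣ x.natAbs unless x is a prime power
    by_contra hpp
    apply hnmx
    rw [← Int.natAbs_dvd_natAbs]
    have hmn : m.natAbs ≠ 0 := Int.natAbs_ne_zero.mpr hm
    have hxn : x.natAbs ≠ 0 := Int.natAbs_ne_zero.mpr hx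
    rw [← Nat.factorization_le_iff_dvd hmn hxn]
    intro p
    by_cases hp : p.Prime
    · set k := m.natAbs.factorization p with hk
      have hpk : (p : ℕ) ^ k ∣ m.natAbs := Nat.ordProj_dvd _ _
      have hdm : ((p : ℤ)) ^ k ∣ m := intAbs_pow_dvd.mpr hpk
      by_cases hk0 : k = 0
      · simp [hk0]
      · have hne : ((p : ℤ)) ^ k ≠ 0 := pow_ne_zero _ (by exact_mod_cast hp.ne_zero)
        rcases hcomp _ hne hdm with h | h
        · -- x ∣ p ^ k : then natAbs x divides p^k, so it's a prime power or unit
          exfalso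
          have : x.natAbs ∣ p ^ k := dvd_intAbs_pow.mp h
          obtain ⟨j, hj, hxj⟩ := (Nat.dvd_prime_pow hp).mp this
          rcases Nat.eq_zero_or_pos j with hj0 | hj0
          · exact hx1 (Int.natAbs_dvd.mp (by simp [hxj, hj0]))
          · exact hpp ⟨p, j, hp.prime, hj0, hxj.symm⟩
        · -- p ^ k ∣ x
          have : p ^ k ∣ x.natAbs := intAbs_pow_dvd.mp h
          exact (hp.pow_dvd_iff_le_factorization hxn).mp this
    · simp [Nat.factorization_eq_zero_of_not_prime _ hp]
  · rintro ⟨p, b, hp, hb, hxb⟩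
    rw [← Nat.prime_iff] at hp
    refine ⟨x * p, ?_, ?_⟩
    · refine (rr_iff hx (mul_ne_zero hx (by exact_mod_cast hp.ne_zero))).mpr
        ⟨⟨p, rfl⟩, fun d hd hdm => ?_⟩
      have hdn : d.natAbs ∣ p ^ (b + 1) := by
        have := Int.natAbs_dvd_natAbs.mpr hdm
        rwa [Int.natAbs_mul, Int.natAbs_natCast, ← hxb, ← pow_succ] at this
      obtain ⟨j, hj, hdj⟩ := (Nat.dvd_prime_pow hp).mp hdn
      rcases le_or_gt j b with hjb | hjb
      · right
        rw [← Int.natAbs_dvd_natAbs, hdj, ← hxb]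
        exact pow_dvd_pow p hjb
      · left
        rw [← Int.natAbs_dvd_natAbs, hdj, ← hxb]
        exact pow_dvd_pow p (by omega)
    · intro hR
      have hm : (x * p : ℤ) ≠ 0 := mul_ne_zero hx (by exact_mod_cast hp.ne_zero)
      have := Int.natAbs_dvd_natAbs.mpr (rr_dvd hm hx hR)
      rw [Int.natAbs_mul, Int.natAbs_natCast, ← hxb, ← pow_succ] at this
      have := (Nat.pow_dvd_pow_iff_le_right hp.one_lt).mp this
      omega

/-- hypotheses on the transferred automorphism -/
def GoodG (g : ℤ ≃ ℤ) : Prop :=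
  (∀ a b : ℤ, (addPowerGraph ℤ).Adj a b ↔ (addPowerGraph ℤ).Adj (g a) (g b))
    ∧ g 0 = 0 ∧ g 1 = 1

section
variable {g : ℤ ≃ ℤ} (hg : GoodG g)
include hg

lemma goodg_symm : GoodG g.symm := by
  obtain ⟨hA, h0, h1⟩ := hg
  refine ⟨fun a b => ?_, ?_, ?_⟩
  · conv_lhs => rw [show a = g (g.symm a) from (g.apply_symm_apply a).symm,
      show b = g (g.symm b) from (g.apply_symm_apply b).symm]
    exact (hA _ _).symm
  · exact g.symm_apply_eq.mpr h0.symm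
  · exact g.symm_apply_eq.mpr h1.symm

lemma g_nbr (x z : ℤ) : Nbr x z ↔ Nbr (g x) (g z) := by
  unfold Nbr
  rw [← hg.1 x z]
  exact or_congr Iff.rfl ⟨fun h => by rw [h], fun h => g.injective h⟩

lemma g_rr (x y : ℤ) : Rr x y ↔ Rr (g x) (g y) := by
  constructor
  · intro h z hz
    have := h (g.symm z) (by rw [g_nbr hg]; simpa using hz)
    rwa [g_nbr hg, g.apply_symm_apply] at this
  · intro h z hz
    have := h (g z) ((g_nbr hg y z).mp hz)
    rwa [← g_nbr hg] at this

lemma g_ne (hx : x ≠ 0) : g x ≠ 0 := fun h =>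
  hx (g.injective (by rw [h, hg.2.1]))

lemma g_unit (h1 : x ∣ 1) : g x ∣ 1 := by
  have hx : x ≠ 0 := fun h => by simp [h] at h1
  have := (g_rr hg x 1).mp ((rr_one hx).mpr h1)
  rw [hg.2.2] at this
  exact (rr_one (g_ne hg hx)).mp this

lemma g_not_unit (hx : x ≠ 0) (h1 : ¬ x ∣ 1) : ¬ g x ∣ 1 := by
  intro h
  apply h1
  have := g_unit (goodg_symm hg) (x := g x) h
  rwa [g.symm_apply_apply] at this

lemma g_pp (hx : x ≠ 0) (h1 : ¬ x ∣ 1) (hpp : PPz x) : PPz (g x) := by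
  rw [← pp_char (g_ne hg hx) (g_not_unit hg hx h1)]
  obtain ⟨m, h1', h2'⟩ := (pp_char hx h1).mpr hpp
  exact ⟨g m, (g_rr hg x m).mp h1', fun hc => h2' ((g_rr hg m x).mpr hc)⟩

/-- all cases except both-multiprime -/
lemma Z1 (hx : x ≠ 0) (hy : y ≠ 0) (hdvd : x ∣ y)
    (hcase : x ∣ 1 ∨ y ∣ x ∨ PPz y ∨ PPz x) : g x ∣ g y := by
  by_cases hx1 : x ∣ 1
  · exact (g_unit hg hx1).trans (one_dvd _)
  by_cases hyx : y ∣ x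
  · exact rr_dvd (g_ne hg hx) (g_ne hg hy)
      ((g_rr hg x y).mp (rr_of_dvd_dvd hx hy hdvd hyx))
  have hy1 : ¬ y ∣ 1 := fun h => hx1 (hdvd.trans h)
  by_cases hppy : PPz y
  · -- y is a prime power
    obtain ⟨p, b, hp, hb, hyb⟩ := hppy
    rw [← Nat.prime_iff] at hp
    have hR : Rr x y := by
      refine (rr_iff hx hy).mpr ⟨hdvd, fun d hd hdy => ?_⟩
      have hdn : d.natAbs ∣ p ^ b := by
        have := Int.natAbs_dvd_natAbs.mpr hdy; rwa [← hyb] at this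
      have hxn : x.natAbs ∣ p ^ b := by
        have := Int.natAbs_dvd_natAbs.mpr hdvd; rwa [← hyb] at this
      obtain ⟨j, hj, hdj⟩ := (Nat.dvd_prime_pow hp).mp hdn
      obtain ⟨i, hi, hxi⟩ := (Nat.dvd_prime_pow hp).mp hxn
      rcases le_or_gt i j with hij | hij
      · left; rw [← Int.natAbs_dvd_natAbs, hdj, hxi]; exact pow_dvd_pow p hij
      · right; rw [← Int.natAbs_dvd_natAbs, hdj, hxi]; exact pow_dvd_pow p hij.le
    exact rr_dvd (g_ne hg hx) (g_ne hg hy) ((g_rr hg x y).mp hR)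
  · have h : PPz x := by
      rcases hcase with h | h | h | h
      · exact absurd h hx1
      · exact absurd h hyx
      · exact absurd h hppy
      · exact h
    -- x is a prime power, y is not (and y does not divide x)
    have hAdj : (addPowerGraph ℤ).Adj x y := (adjZ_iff x y).mpr
      ⟨fun e => hyx (e ▸ dvd_rfl), hx, hy, Or.inl hdvd⟩
    have := (adjZ_iff (g x) (g y)).mp ((hg.1 x y).mp hAdj)
    rcases this.2.2.2 with hgood | hbad
    · exact hgood
    · -- g y divides g x which is a prime power: contradictions
      exfalso
      obtain ⟨q, c, hq, hc, hgxc⟩ := g_pp hg hx hx1 h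
      rw [← Nat.prime_iff] at hq
      have : (g y).natAbs ∣ q ^ c := by
        have := Int.natAbs_dvd_natAbs.mpr hbad; rwa [← hgxc] at this
      obtain ⟨j, hj, hyj⟩ := (Nat.dvd_prime_pow hq).mp this
      rcases Nat.eq_zero_or_pos j with hj0 | hj0
      · -- g y is a unit, so y is a unit, so x ∣ 1
        apply g_not_unit hg hy hy1
        exact Int.natAbs_dvd.mp (by simp [hyj, hj0])
      · -- g y is a prime power, so y is a prime power
        have hppgy : PPz (g y) := ⟨q, j, hq.prime, hj0, hyj.symm⟩
        have := g_pp (goodg_symm hg) (g_ne hg hy) (g_not_unit hg hy hy1) hppgy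
        rw [g.symm_apply_apply] at this
        exact hppy this

lemma Zmain (hx : x ≠ 0) (hy : y ≠ 0) (hdvd : x ∣ y) : g x ∣ g y := by
  by_cases hx1 : x ∣ 1
  · exact Z1 hg hx hy hdvd (Or.inl hx1)
  by_cases hyx : y ∣ x
  · exact Z1 hg hx hy hdvd (Or.inr (Or.inl hyx))
  by_cases hppy : PPz y
  · exact Z1 hg hx hy hdvd (Or.inr (Or.inr (Or.inl hppy)))
  by_cases hppx : PPz x
  · exact Z1 hg hx hy hdvd (Or.inr (Or.inr (Or.inr hppx)))
  -- both x and y are divisible by at least two primes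
  have hgx := g_ne hg hx
  have hgy := g_ne hg hy
  rw [← Int.natAbs_dvd_natAbs, ← Nat.factorization_le_iff_dvd
    (Int.natAbs_ne_zero.mpr hgx) (Int.natAbs_ne_zero.mpr hgy)]
  intro p
  by_cases hp : p.Prime
  swap
  · simp [Nat.factorization_eq_zero_of_not_prime _ hp]
  set k := (g x).natAbs.factorization p with hk
  by_cases hk0 : k = 0
  · simp [hk0]
  rw [← hp.pow_dvd_iff_le_factorization (Int.natAbs_ne_zero.mpr hgy)]
  have hsgx : ((p : ℤ)) ^ k ∣ g x := intAbs_pow_dvd.mpr (Nat.ordProj_dvd _ _)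
  set s : ℤ := (p : ℤ) ^ k with hs
  have hsn : s.natAbs = p ^ k := by rw [hs, Int.natAbs_pow, Int.natAbs_natCast]
  have hs0 : s ≠ 0 := pow_ne_zero _ (by exact_mod_cast hp.ne_zero)
  have hs1 : ¬ s ∣ 1 := by
    intro hd
    have : p ^ k ∣ 1 := by rw [← hsn]; exact Int.natAbs_dvd_natAbs.mpr hd
    have := Nat.le_of_dvd one_pos this
    have : 2 ≤ p ^ k := by
      calc 2 ≤ p := hp.two_le
      _ = p ^ 1 := (pow_one p).symm
      _ ≤ p ^ k := Nat.pow_le_pow_right hp.pos (by omega)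
    omega
  have hpps : PPz s := ⟨p, k, hp.prime, Nat.pos_of_ne_zero hk0, hsn.symm⟩
  have hgs := goodg_symm hg
  have htx : g.symm s ∣ x := by
    have := Z1 hgs hs0 hgx hsgx (Or.inr (Or.inr (Or.inr hpps)))
    rwa [g.symm_apply_apply] at this
  have hppt : PPz (g.symm s) := g_pp hgs hs0 hs1 hpps
  have ht0 : g.symm s ≠ 0 := g_ne hgs hs0
  have ht1 : ¬ g.symm s ∣ 1 := g_not_unit hgs hs0 hs1
  have hty : g.symm s ∣ y := htx.trans hdvd
  have := Z1 hg ht0 hy hty (Or.inr (Or.inr (Or.inr hppt)))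
  rw [g.apply_symm_apply] at this
  exact intAbs_pow_dvd.mp this

end
end ZSide

lemma addArc_iff (x y : ℤ) : addPowArc x y ↔ (x ≠ y ∧ x ≠ 0 ∧ y ≠ 0 ∧ x ∣ y) := by
  unfold addPowArc
  constructor
  · rintro ⟨hne, n, hn, rfl⟩
    rw [zsmul_eq_mul] at *
    have hx : x ≠ 0 := by rintro rfl; simp at hne
    exact ⟨hne, hx, mul_ne_zero (by exact_mod_cast hn) hx, ⟨n, by push_cast; ring⟩⟩
  · rintro ⟨hne, hx, hy, c, rfl⟩
    refine ⟨hne, c, ?_, by rw [zsmul_eq_mul]; push_cast; ring⟩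
    rintro rfl; simp at hy


section Grp
variable {H : Type*} [Group H] (f : addPowerGraph ℤ ≃g powerGraph H)

lemma zero_not_adj (z : ℤ) : ¬ (addPowerGraph ℤ).Adj 0 z := by
  rintro ⟨hne, n, hn, h | h⟩
  · apply hne; rw [h]; simp
  · apply hne
    rw [zsmul_eq_mul] at h
    rcases mul_eq_zero.mp h.symm with h' | h'
    · exact absurd (by exact_mod_cast h') hn
    · rw [h']

include f

lemma f_zero : f 0 = 1 := by
  by_contra hne
  have h2 : (f 0) ^ (2:ℤ) ≠ f 0 := by
    intro h
    apply hne
    have h' : f 0 * f 0 = f 0 * 1 := by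
      rw [mul_one]
      calc f 0 * f 0 = f 0 ^ (2:ℤ) := by
            rw [show (2:ℤ) = 1 + 1 from rfl, zpow_add, zpow_one]
      _ = f 0 := h
    exact mul_left_cancel h'
  have hadj : (powerGraph H).Adj (f 0) ((f 0) ^ (2:ℤ)) :=
    ⟨fun h => h2 h.symm, 2, two_ne_zero, Or.inl rfl⟩
  obtain ⟨z, hz⟩ := f.surjective ((f 0) ^ (2:ℤ))
  rw [← hz] at hadj
  exact zero_not_adj z ((f.map_adj_iff).mp hadj)

lemma tf : ∀ h : H, h ≠ 1 → ∀ n : ℤ, n ≠ 0 → h ^ n ≠ 1 := by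
  intro h hne n hn h1
  have hadj : (powerGraph H).Adj h (f 0) := by
    rw [f_zero f]
    exact ⟨hne, n, hn, Or.inl h1.symm⟩
  obtain ⟨z, hz⟩ := f.surjective h
  rw [← hz] at hadj
  exact zero_not_adj z (((addPowerGraph ℤ).adj_symm ((f.map_adj_iff).mp hadj)))

lemma zpow_injH {h : H} (hne : h ≠ 1) {a b : ℤ} (hab : h ^ a = h ^ b) : a = b := by
  by_contra hne'
  apply tf f h hne (a - b) (by omega)
  rw [zpow_sub, hab, mul_inv_cancel]

lemma dom : ∀ w : H, ∃ n : ℤ, w = (f 1) ^ n := by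
  intro w
  by_cases hw1 : w = 1
  · exact ⟨0, by simp [hw1]⟩
  by_cases hwu : w = f 1
  · exact ⟨1, by simp [hwu]⟩
  obtain ⟨z, hz⟩ := f.surjective w
  have hz0 : z ≠ 0 := by rintro rfl; rw [f_zero f] at hz; exact hw1 hz.symm
  have hz1 : z ≠ 1 := by rintro rfl; exact hwu hz.symm
  have hadjZ : (addPowerGraph ℤ).Adj 1 z :=
    ⟨fun h => hz1 h.symm, z, hz0, Or.inl (by simp)⟩
  have hadj : (powerGraph H).Adj (f 1) w := by rw [← hz]; exact f.map_adj_iff.mpr hadjZ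
  obtain ⟨-, n, hn, hcase⟩ := hadj
  rcases hcase with h | h
  · exact ⟨n, h⟩
  rcases eq_or_ne n 1 with rfl | hn1
  · exact ⟨1, by simpa using h.symm⟩
  rcases eq_or_ne n (-1) with rfl | hnm1
  · refine ⟨-1, ?_⟩
    rw [h, ← zpow_mul]; norm_num
  exfalso
  set a : ℤ := n ^ 2 + 1 with ha
  have ha0 : a ≠ 0 := by positivity
  have hwne : w ≠ 1 := hw1
  have hnd_a : ¬ n ∣ a := by
    intro hd
    have hn2 : n ∣ n ^ 2 := ⟨n, by ring⟩
    have : n ∣ 1 := (dvd_add_right hn2).mp hd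
    rcases Int.isUnit_iff.mp (isUnit_of_dvd_one this) with h' | h' <;> simp_all
  have hna : ¬ a ∣ n := by
    intro hd
    have h1 : a ≤ |n| := Int.le_of_dvd (abs_pos.mpr hn) ((dvd_abs a n).mpr hd)
    nlinarith [sq_abs n, abs_nonneg n]
  by_cases hzz1 : w ^ a = 1
  · exact tf f w hwne a ha0 hzz1
  by_cases hzzu : w ^ a = f 1
  · rw [h] at hzzu
    have := zpow_injH f hwne hzzu
    exact hnd_a (this ▸ dvd_refl n)
  obtain ⟨zc, hzc⟩ := f.surjective (w ^ a)
  have hzc0 : zc ≠ 0 := by rintro rfl; rw [f_zero f] at hzc; exact hzz1 hzc.symm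
  have hzc1 : zc ≠ 1 := by rintro rfl; exact hzzu hzc.symm
  have hadjZ2 : (addPowerGraph ℤ).Adj 1 zc :=
    ⟨fun h' => hzc1 h'.symm, zc, hzc0, Or.inl (by simp)⟩
  have hadj2 : (powerGraph H).Adj (f 1) (w ^ a) := by
    rw [← hzc]; exact f.map_adj_iff.mpr hadjZ2
  obtain ⟨-, m, hm, hcase2⟩ := hadj2
  rcases hcase2 with h' | h'
  · rw [h, ← zpow_mul] at h'
    have := zpow_injH f hwne h'
    exact hnd_a ⟨m, this⟩
  · rw [← zpow_mul] at h'
    rw [h] at h'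
    have := zpow_injH f hwne h'
    exact hna ⟨m, this⟩


lemma f_one_ne_one : (f 1 : H) ≠ 1 := fun h =>
  one_ne_zero (f.injective (h.trans (f_zero f).symm))

noncomputable def lg (w : H) : ℤ := (dom f w).choose

lemma lg_spec (w : H) : w = (f 1) ^ (lg f w) := (dom f w).choose_spec

lemma lg_eq {w : H} {n : ℤ} (h : w = (f 1) ^ n) : lg f w = n :=
  zpow_injH f (f_one_ne_one f) ((lg_spec f w).symm.trans h)

noncomputable def mulEquivH : H ≃* Multiplicative ℤ := by
  refine (MulEquiv.ofBijective ((zpowersHom H) (f 1)) ⟨?_, ?_⟩).symm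
  · intro a b hab
    simp only [zpowersHom_apply] at hab
    exact Multiplicative.toAdd.injective (zpow_injH f (f_one_ne_one f) hab)
  · intro w
    obtain ⟨n, hn⟩ := dom f w
    exact ⟨Multiplicative.ofAdd n, by simp [hn]⟩

noncomputable def gE : ℤ ≃ ℤ :=
  Equiv.ofBijective (fun z => lg f (f z)) (by
    constructor
    · intro a b hab
      have hab' : lg f (f a) = lg f (f b) := hab
      apply f.injective
      rw [lg_spec f (f a), lg_spec f (f b), hab']
    · intro m
      exact ⟨f.symm ((f 1) ^ m), lg_eq f (by simp)⟩)

lemma gE_apply (z : ℤ) : f z = (f 1) ^ (gE f z) := lg_spec f (f z)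

lemma gE_good : GoodG (gE f) := by
  refine ⟨fun a b => ?_, ?_, ?_⟩
  · have hmap : (powerGraph H).Adj (f a) (f b) ↔ (addPowerGraph ℤ).Adj a b :=
      f.map_adj_iff
    rw [← hmap, gE_apply f a, gE_apply f b]
    -- Adj (f1^c) (f1^d) ↔ AdjZ c d
    set c := gE f a
    set d := gE f b
    constructor
    · rintro ⟨hne, n, hn, h | h⟩
      · refine ⟨fun e => hne (by rw [e]), n, hn, Or.inl ?_⟩
        rw [← zpow_mul] at h
        have h2 := zpow_injH f (f_one_ne_one f) h
        rw [zsmul_eq_mul, h2]; push_cast; ring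
      · refine ⟨fun e => hne (by rw [e]), n, hn, Or.inr ?_⟩
        rw [← zpow_mul] at h
        have h2 := zpow_injH f (f_one_ne_one f) h
        rw [zsmul_eq_mul, h2]; push_cast; ring
    · rintro ⟨hne, n, hn, h | h⟩
      · rw [zsmul_eq_mul] at h
        refine ⟨fun e => hne (zpow_injH f (f_one_ne_one f) e), n, hn, Or.inl ?_⟩
        rw [← zpow_mul]
        congr 1
        push_cast at h
        rw [h]; ring
      · rw [zsmul_eq_mul] at h
        refine ⟨fun e => hne (zpow_injH f (f_one_ne_one f) e), n, hn, Or.inr ?_⟩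
        rw [← zpow_mul]
        congr 1
        push_cast at h
        rw [h]; ring
  · exact lg_eq f (by rw [f_zero f, zpow_zero])
  · exact lg_eq f (by rw [zpow_one])

lemma powArc_iff (x y : ℤ) :
    powArc (f x) (f y) ↔ (x ≠ y ∧ gE f x ≠ 0 ∧ gE f y ≠ 0 ∧ gE f x ∣ gE f y) := by
  unfold powArc
  have hinj : ∀ a b : ℤ, f a = f b ↔ a = b :=
    fun a b => ⟨fun e => f.injective e, fun e => by rw [e]⟩
  constructor
  · rintro ⟨hne, n, hn, h⟩
    have hxy : x ≠ y := fun e => hne (by rw [e])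
    rw [gE_apply f x, ← zpow_mul, gE_apply f y] at h
    have heq := zpow_injH f (f_one_ne_one f) h
    have hgne : gE f x ≠ gE f y := fun e => hxy ((gE f).injective e)
    have hgx : gE f x ≠ 0 := by
      rintro h0; rw [h0] at heq; simp at heq
      exact hgne (by rw [h0, heq])
    refine ⟨hxy, hgx, ?_, ⟨n, heq⟩⟩
    rw [heq]
    exact mul_ne_zero hgx hn
  · rintro ⟨hxy, hgx, hgy, c, hc⟩
    refine ⟨fun e => hxy (f.injective e), c, ?_, ?_⟩
    · rintro rfl; rw [mul_zero] at hc; exact hgy hc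
    · rw [gE_apply f x, ← zpow_mul, gE_apply f y, hc]

theorem arcs (x y : ℤ) : addPowArc x y ↔ powArc (f x) (f y) := by
  rw [addArc_iff x y, powArc_iff f x y]
  have hgood := gE_good f
  constructor
  · rintro ⟨hne, hx, hy, hdvd⟩
    refine ⟨hne, ?_, ?_, Zmain hgood hx hy hdvd⟩
    · exact fun e => hx ((gE f).injective (by rw [e, hgood.2.1]))
    · exact fun e => hy ((gE f).injective (by rw [e, hgood.2.1]))
  · rintro ⟨hne, hgx, hgy, hdvd⟩
    have hx : x ≠ 0 := by rintro rfl; exact hgx hgood.2.1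
    have hy : y ≠ 0 := by rintro rfl; exact hgy hgood.2.1
    refine ⟨hne, hx, hy, ?_⟩
    have := Zmain (goodg_symm hgood) hgx hgy hdvd
    simpa using this

end Grp

end PowZAux

/-- If the power graph of a group `H` is isomorphic to the power graph of `ℤ`,
then `H ≅ ℤ`, and moreover every power graph isomorphism `f : P(ℤ) → P(H)` is an
isomorphism of directed power graphs. -/
theorem stmt_0 (H : Type*) [Group H]
    (h : Nonempty (addPowerGraph ℤ ≃g powerGraph H)) :
    Nonempty (H ≃* Multiplicative ℤ) ∧
      ∀ (f : addPowerGraph ℤ ≃g powerGraph H) (x y : ℤ),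
        addPowArc x y ↔ powArc (f x) (f y) := by
  obtain ⟨f⟩ := h
  exact ⟨⟨PowZAux.mulEquivH f⟩, fun f x y => PowZAux.arcs f x y⟩
end

section
/- Let A be a unitary subgroup of the additive group ℚ of rationals, i.e. a subgroup with 1 ∈ A. Then there exists x ∈ A such that the in-neighbourhood I_A(x) is infinite if and only if either there exists a prime p such that 1/p^α ∈ A for every natural number α, or the set of primes p with 1/p ∈ A is infinite. -/
/-- The in-neighbourhood of `x` in the directed power graph of a subgroup `A` of
`ℚ`: elements `y` of `A` with `y ≠ x` and `x` a nonzero integer multiple of `y`. -/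
def inSetA (A : AddSubgroup ℚ) (x : ℚ) : Set ℚ :=
  {y : ℚ | y ∈ A ∧ y ≠ x ∧ ∃ n : ℤ, n ≠ 0 ∧ x = n • y}

lemma one_div_den_mem (A : AddSubgroup ℚ) (hA : (1:ℚ) ∈ A) {y : ℚ} (hy : y ∈ A) :
    (1 : ℚ) / (y.den : ℚ) ∈ A := by
  have hco : Int.gcd y.num (y.den : ℤ) = 1 := by
    simpa [Int.gcd] using y.reduced
  have hbez := Int.gcd_eq_gcd_ab y.num (y.den : ℤ)
  rw [hco] at hbez
  set u := Int.gcdA y.num y.den with hu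
  set v := Int.gcdB y.num y.den with hv
  have hd : ((y.den : ℚ)) ≠ 0 := by
    exact_mod_cast y.den_nz
  have hnum : (y.num : ℚ) = y * y.den := by
    exact (div_eq_iff hd).mp (Rat.num_div_den y)
  have key : (1 : ℚ) / (y.den : ℚ) = u • y + v • (1:ℚ) := by
    rw [zsmul_eq_mul, zsmul_eq_mul, mul_one]
    have hbezq : (1:ℚ) = y.num * u + y.den * v := by exact_mod_cast hbez
    rw [hnum] at hbezq
    field_simp
    linear_combination hbezq
  rw [key]
  exact A.add_mem (A.zsmul_mem hy u) (A.zsmul_mem hA v)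

lemma one_div_dvd_mem (A : AddSubgroup ℚ) {m d : ℕ} (hm : m ≠ 0) (hd : d ∣ m)
    (h : (1 : ℚ) / m ∈ A) : (1 : ℚ) / d ∈ A := by
  obtain ⟨k, rfl⟩ := hd
  have hd0 : (d:ℚ) ≠ 0 := by exact_mod_cast fun h0 => hm (by simp [h0])
  have hk0 : (k:ℚ) ≠ 0 := by exact_mod_cast fun h0 => hm (by simp [h0])
  have key : (1:ℚ)/d = (k:ℤ) • ((1:ℚ)/((d*k : ℕ):ℚ)) := by
    rw [zsmul_eq_mul]; push_cast; field_simp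
  rw [key]
  exact A.zsmul_mem h k

/-- For a unitary subgroup `A` of `ℚ`: some `x ∈ A` has infinite in-neighbourhood
iff either some prime `p` has `1/p^α ∈ A` for all `α`, or infinitely many primes
`p` satisfy `1/p ∈ A`. -/
theorem stmt_16 (A : AddSubgroup ℚ) (hA : (1 : ℚ) ∈ A) :
    (∃ x ∈ A, (inSetA A x).Infinite) ↔
      ((∃ p : ℕ, p.Prime ∧ ∀ α : ℕ, (1 : ℚ) / (p : ℚ) ^ α ∈ A) ∨
        {p : ℕ | p.Prime ∧ (1 : ℚ) / (p : ℚ) ∈ A}.Infinite) := by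
  constructor
  · rintro ⟨x, hxA, hinf⟩
    by_contra hcon
    push_neg at hcon
    obtain ⟨h1, h2⟩ := hcon
    -- choose heights
    have hchoice : ∀ p : ℕ, ∃ α : ℕ, p.Prime → (1:ℚ)/(p:ℚ)^α ∉ A := by
      intro p
      by_cases hp : p.Prime
      · obtain ⟨α, hα⟩ := h1 p hp
        exact ⟨α, fun _ => hα⟩
      · exact ⟨0, fun hp' => absurd hp' hp⟩
    choose f hf using hchoice
    set P : Finset ℕ := h2.toFinset with hP
    set M : ℕ := ∏ p ∈ P, p ^ f p with hMdef
    have hM0 : M ≠ 0 := by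
      rw [hMdef]
      rw [Finset.prod_ne_zero_iff]
      intro p hp
      have hp' : p.Prime := (h2.mem_toFinset.mp hp).1
      exact pow_ne_zero _ hp'.ne_zero
    have hMpos : 0 < M := Nat.pos_of_ne_zero hM0
    -- key divisibility
    have key : ∀ m : ℕ, m ≠ 0 → (1:ℚ)/(m:ℚ) ∈ A → m ∣ M := by
      intro m hm hmem
      rw [← Nat.factorization_le_iff_dvd hm hM0]
      rw [Finsupp.le_iff]
      intro p hpsupp
      rw [Nat.support_factorization] at hpsupp
      have hp : p.Prime := Nat.prime_of_mem_primeFactors hpsupp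
      set e := m.factorization p with he
      have he1 : 1 ≤ e := by
        have := Nat.Prime.factorization_pos_of_dvd hp hm
          (Nat.dvd_of_mem_primeFactors hpsupp)
        omega
      have hpe : p ^ e ∣ m := Nat.ordProj_dvd m p
      have h1e : (1:ℚ)/(p:ℚ)^e ∈ A := by
        have := one_div_dvd_mem A hm hpe hmem
        rwa [Nat.cast_pow] at this
      have hpA : (1:ℚ)/(p:ℚ) ∈ A := by
        have hdvd : p ∣ p ^ e := dvd_pow_self p (by omega)
        have := one_div_dvd_mem A (pow_ne_zero _ hp.ne_zero) hdvd
          (by rwa [Nat.cast_pow])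
        exact this
      have hpP : p ∈ P := h2.mem_toFinset.mpr ⟨hp, hpA⟩
      have he_le : e ≤ f p := by
        by_contra hcon2
        push_neg at hcon2
        have hdvd : p ^ f p ∣ p ^ e := pow_dvd_pow p (le_of_lt hcon2)
        have := one_div_dvd_mem A (pow_ne_zero _ hp.ne_zero) hdvd
          (by rwa [Nat.cast_pow])
        rw [Nat.cast_pow] at this
        exact hf p hp this
      have hdvdM : p ^ f p ∣ M := Finset.dvd_prod_of_mem (fun q => q ^ f q) hpP
      have hfM : f p ≤ M.factorization p :=
        (Nat.Prime.pow_dvd_iff_le_factorization hp hM0).mp hdvdM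
      omega
    -- x ≠ 0
    have hx0 : x ≠ 0 := by
      rintro rfl
      apply hinf
      apply Set.Finite.subset (Set.finite_singleton (0:ℚ))
      rintro y ⟨-, -, n, hn0, hy⟩
      have : (n:ℚ) * y = 0 := by rw [zsmul_eq_mul] at hy; exact hy.symm
      rcases mul_eq_zero.mp this with h | h
      · exact absurd (by exact_mod_cast h) hn0
      · simp [h]
    -- bound the set
    set C : ℤ := |x.num| * M with hC
    have hsub : inSetA A x ⊆ (fun y : ℚ => (y.num, y.den)) ⁻¹'
        (Set.Icc (-C) C ×ˢ Set.Icc 1 M) := by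
      rintro y ⟨hyA, hyne, n, hn0, hxny⟩
      have hden_dvd : y.den ∣ M := key y.den y.den_nz (one_div_den_mem A hA hyA)
      have hden_le : y.den ≤ M := Nat.le_of_dvd hMpos hden_dvd
      have hdenq : (0:ℚ) < (y.den : ℚ) := by exact_mod_cast y.pos
      have hn1 : (1:ℚ) ≤ |(n:ℚ)| := by
        exact_mod_cast Int.one_le_abs (by omega)
      have hyabs : |y| ≤ |x| := by
        rw [hxny, zsmul_eq_mul, abs_mul]
        nlinarith [abs_nonneg y]
      have hxdenq : (0:ℚ) < (x.den : ℚ) := by exact_mod_cast x.pos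
      have hxnum : (x.num : ℚ) = x * x.den :=
        (div_eq_iff (ne_of_gt hxdenq)).mp (Rat.num_div_den x)
      have hxabs : |x| ≤ |(x.num : ℚ)| := by
        rw [hxnum, abs_mul, abs_of_pos hxdenq]
        have hd1 : (1:ℚ) ≤ (x.den : ℚ) := by exact_mod_cast x.pos
        nlinarith [abs_nonneg x]
      have hyn : (y.num : ℚ) = y * y.den :=
        (div_eq_iff (ne_of_gt hdenq)).mp (Rat.num_div_den y)
      have hynum : |(y.num : ℚ)| = |y| * y.den := by
        rw [hyn, abs_mul, abs_of_pos hdenq]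
      have hnum_le : |(y.num : ℚ)| ≤ (C : ℚ) := by
        rw [hC, hynum]
        push_cast
        have h2 : ((y.den:ℚ)) ≤ (M:ℚ) := by exact_mod_cast hden_le
        nlinarith [abs_nonneg ((x.num : ℚ)), le_trans hyabs hxabs, hdenq]
      have hnum_le' : |y.num| ≤ C := by exact_mod_cast hnum_le
      constructor
      · simp only [Set.mem_Icc]
        exact abs_le.mp hnum_le'
      · exact ⟨y.pos, hden_le⟩
    have hTfin : ((fun y : ℚ => (y.num, y.den)) ⁻¹'
        (Set.Icc (-C) C ×ˢ Set.Icc 1 M)).Finite := by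
      apply Set.Finite.preimage
      · intro a _ b _ hab
        exact Rat.ext (congrArg Prod.fst hab) (congrArg Prod.snd hab)
      · exact Set.Finite.prod (Set.finite_Icc _ _) (Set.finite_Icc _ _)
    exact hinf (hTfin.subset hsub)
  · rintro (⟨p, hp, hpa⟩ | hinf)
    · refine ⟨1, hA, ?_⟩
      have hp1 : (1:ℚ) < (p:ℚ) := by exact_mod_cast hp.one_lt
      have hp0 : (0:ℚ) < (p:ℚ) := by positivity
      apply Set.infinite_of_injective_forall_mem
        (f := fun α : ℕ => (1:ℚ)/(p:ℚ)^(α+1))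
      · intro a b hab
        simp only [one_div] at hab
        have := inv_injective hab
        have h2 := pow_right_injective₀ hp0 (ne_of_gt hp1) this
        omega
      · intro α
        have hgt : (1:ℚ) < (p:ℚ)^(α+1) := one_lt_pow₀ hp1 (Nat.succ_ne_zero α)
        refine ⟨hpa (α+1), ?_, ⟨(p:ℤ)^(α+1), ?_, ?_⟩⟩
        · exact ne_of_lt ((div_lt_one (by positivity)).mpr hgt)
        · exact pow_ne_zero _ (by exact_mod_cast hp.ne_zero)
        · rw [zsmul_eq_mul]
          push_cast
          field_simp
    · refine ⟨1, hA, ?_⟩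
      have himg : ((fun p : ℕ => (1:ℚ)/(p:ℚ)) '' {p : ℕ | p.Prime ∧ (1:ℚ)/(p:ℚ) ∈ A}).Infinite := by
        apply hinf.image
        intro a ha b hb hab
        have ha0 : ((a:ℚ)) ≠ 0 := by exact_mod_cast ha.1.ne_zero
        have hb0 : ((b:ℚ)) ≠ 0 := by exact_mod_cast hb.1.ne_zero
        field_simp at hab
        exact_mod_cast hab.symm
      apply himg.mono
      rintro _ ⟨p, ⟨hp, hpA⟩, rfl⟩
      have hp1 : (1:ℚ) < (p:ℚ) := by exact_mod_cast hp.one_lt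
      refine ⟨hpA, ?_, ⟨(p:ℤ), by exact_mod_cast hp.ne_zero, ?_⟩⟩
      · exact ne_of_lt ((div_lt_one (by positivity)).mpr hp1)
      · rw [zsmul_eq_mul]
        push_cast
        field_simp
end

section
/- Let A be a unitary subgroup of the additive group ℚ of rationals, i.e. a subgroup with 1 ∈ A. Then the following are equivalent: (i) there exists x ∈ A such that the in-neighbourhood I_A(x) is infinite; (ii) for every nonzero x ∈ A, the in-neighbourhood I_A(x) is infinite. -/
lemma bezout_one (a b : ℤ) (h : Int.gcd a b = 1) :
    a * Int.gcdA a b + b * Int.gcdB a b = 1 := by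
  have := Int.gcd_eq_gcd_ab a b
  rw [h] at this
  push_cast at this
  linarith

lemma inv_den_mem (A : AddSubgroup ℚ) (hA : (1:ℚ) ∈ A) {q : ℚ} (hq : q ∈ A) :
    ((q.den : ℚ))⁻¹ ∈ A := by
  obtain ⟨u, v, huv⟩ : ∃ u v : ℤ, u * q.num + v * q.den = 1 :=
    ⟨Int.gcdA q.num q.den, Int.gcdB q.num q.den, by
      have := bezout_one q.num q.den (by simpa [Int.gcd] using q.reduced)
      linarith⟩
  have hd : (q.den : ℚ) ≠ 0 := Nat.cast_ne_zero.2 q.den_nz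
  have key : ((q.den : ℚ))⁻¹ = u • q + v • (1:ℚ) := by
    have hq' : q * q.den = q.num := Rat.mul_den_eq_num q
    have hc : ((u : ℚ)) * q.num + v * q.den = 1 := by exact_mod_cast congrArg (fun z : ℤ => (z : ℚ)) huv
    rw [zsmul_eq_mul, zsmul_eq_mul]
    field_simp
    linear_combination (-(u : ℚ)) * hq' - hc
  rw [key]
  exact A.add_mem (A.zsmul_mem hq u) (A.zsmul_mem hA v)


lemma exists_divisor (A : AddSubgroup ℚ) {x : ℚ} (hx : x ∈ A) (hx0 : x ≠ 0)
    {d : ℕ} (hd0 : d ≠ 0) (hdA : ((d:ℚ))⁻¹ ∈ A) :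
    ∃ z n, z ∈ A ∧ (n : ℤ) ≠ 0 ∧ x = n • z ∧ (d : ℤ) ≤ |n| * x.den ∧
      |z| * d ≤ ((|x.num| : ℤ) : ℚ) := by
  set a : ℤ := x.num * d with ha
  set b : ℤ := (x.den : ℤ) with hb
  have hb0 : 0 < b := Int.natCast_pos.2 x.pos
  have hnum0 : x.num ≠ 0 := Rat.num_ne_zero.2 hx0
  have ha0 : a ≠ 0 := mul_ne_zero hnum0 (by exact_mod_cast hd0)
  set g : ℤ := (Int.gcd a b : ℤ) with hg
  have hgpos : 0 < g := Int.natCast_pos.2 (Nat.pos_of_ne_zero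
    (fun h => ha0 (Int.gcd_eq_zero_iff.1 h).1))
  have hgdvd : g ∣ a := Int.gcd_dvd_left a b
  have hgb : g ∣ b := Int.gcd_dvd_right a b
  have hgle : g ≤ b := Int.le_of_dvd hb0 hgb
  obtain ⟨u, v, huv⟩ : ∃ u v : ℤ, a * u + b * v = g := ⟨_, _, (Int.gcd_eq_gcd_ab a b).symm⟩
  set z : ℚ := u • x + v • ((d:ℚ))⁻¹ with hzdef
  have hzA : z ∈ A := A.add_mem (A.zsmul_mem hx u) (A.zsmul_mem hdA v)
  have hdQpos : (0:ℚ) < d := by exact_mod_cast Nat.pos_of_ne_zero hd0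
  have hdQ : (d : ℚ) ≠ 0 := ne_of_gt hdQpos
  have hdenQpos : (0:ℚ) < (x.den : ℚ) := by exact_mod_cast x.pos
  have hxden : x * x.den = x.num := Rat.mul_den_eq_num x
  have hc : ((x.num:ℚ)) * d * u + x.den * v = g := by
    have := congrArg (fun t : ℤ => (t:ℚ)) huv
    push_cast [ha, hb] at this
    linarith
  have hinv : (d:ℚ)⁻¹ * d = 1 := inv_mul_cancel₀ hdQ
  have hz : z * (x.den * d) = g := by
    calc z * (x.den * d)
        = ((u:ℚ) * x) * (x.den * d) + ((v:ℚ) * (d:ℚ)⁻¹) * (x.den * d) := by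
          rw [hzdef, zsmul_eq_mul, zsmul_eq_mul, add_mul]
      _ = (u:ℚ) * (x * x.den) * d + (v:ℚ) * ((d:ℚ)⁻¹ * d) * x.den := by ring
      _ = (x.num:ℚ) * d * u + x.den * v := by rw [hxden, hinv]; ring
      _ = g := hc
  set n : ℤ := a / g with hn
  have hng : n * g = a := Int.ediv_mul_cancel hgdvd
  have hn0 : n ≠ 0 := by
    intro h; rw [h, zero_mul] at hng; exact ha0 hng.symm
  refine ⟨z, n, hzA, hn0, ?_, ?_, ?_⟩
  · rw [zsmul_eq_mul]
    have hden0 : (x.den * d : ℚ) ≠ 0 := ne_of_gt (mul_pos hdenQpos hdQpos)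
    refine mul_right_cancel₀ hden0 ?_
    rw [mul_assoc, hz]
    have hngQ : (n:ℚ) * g = (x.num:ℚ) * d := by
      have := congrArg (fun t : ℤ => (t:ℚ)) hng
      push_cast [ha] at this
      linarith
    rw [hngQ]
    linear_combination (d:ℚ) * hxden
  · have h1 : |n| * g = |a| := by
      rw [← abs_of_nonneg (le_of_lt hgpos), ← abs_mul, hng]
    have h2 : (d : ℤ) ≤ |a| := by
      rw [ha, abs_mul]
      have h3 : 1 ≤ |x.num| := Int.one_le_abs hnum0
      have hd' : |(d:ℤ)| = (d:ℤ) := abs_of_nonneg (Int.natCast_nonneg _)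
      nlinarith [Int.natCast_nonneg d]
    have := abs_nonneg n
    nlinarith
  · have hgQpos : (0:ℚ) < (g:ℚ) := by exact_mod_cast hgpos
    have habs : |z| * (x.den * d) = (g:ℚ) := by
      have h := congrArg abs hz
      rwa [abs_mul, abs_of_pos (mul_pos hdenQpos hdQpos), abs_of_pos hgQpos] at h
    have hgleQ : (g : ℚ) ≤ (x.den : ℚ) := by
      rw [hb] at hgle; exact_mod_cast hgle
    have hnum1 : (1:ℚ) ≤ ((|x.num| : ℤ) : ℚ) := by
      exact_mod_cast Int.one_le_abs hnum0
    nlinarith [abs_nonneg z]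



lemma unbounded_inv (A : AddSubgroup ℚ) (hA : (1:ℚ) ∈ A) {x₀ : ℚ} (hx0 : x₀ ≠ 0)
    (hinf : (inSetA A x₀).Infinite) (M : ℕ) :
    ∃ d : ℕ, M ≤ d ∧ d ≠ 0 ∧ ((d:ℚ))⁻¹ ∈ A := by
  set B : ℤ := |x₀.num| * (M+1) with hB
  have hFin : ((fun n : ℤ => x₀ / n) '' (Set.Icc (-B) B)).Finite :=
    (Set.finite_Icc _ _).image _
  obtain ⟨y, hyI, hyF⟩ := (hinf.diff hFin).nonempty
  obtain ⟨hyA, hyne, n, hn0, hxn⟩ := hyI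
  have hnQ : ((n:ℚ)) ≠ 0 := Int.cast_ne_zero.2 hn0
  have hy0 : y ≠ 0 := by
    intro h; apply hx0; rw [hxn, h, smul_zero]
  have hyabs : (0:ℚ) < |y| := abs_pos.2 hy0
  have hxny : x₀ = (n:ℚ) * y := by rw [hxn, zsmul_eq_mul]
  have hnum0 : x₀.num ≠ 0 := Rat.num_ne_zero.2 hx0
  have hxled : |x₀| ≤ ((|x₀.num| : ℤ) : ℚ) := by
    have h1 : x₀ * x₀.den = x₀.num := Rat.mul_den_eq_num x₀
    have h2 : |x₀| * (x₀.den:ℚ) = ((|x₀.num| : ℤ) : ℚ) := by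
      have := congrArg abs h1
      rwa [abs_mul, abs_of_pos (show (0:ℚ) < (x₀.den:ℚ) by exact_mod_cast x₀.pos),
        ← Int.cast_abs] at this
    have h3 : (1:ℚ) ≤ (x₀.den:ℚ) := by exact_mod_cast x₀.pos
    nlinarith [abs_nonneg x₀]
  have hylt : |y| * (M+1) < 1 := by
    by_contra hge
    push_neg at hge
    apply hyF
    refine ⟨n, ?_, ?_⟩
    · rw [Set.mem_Icc, ← abs_le]
      have habsn : |x₀| = |(n:ℚ)| * |y| := by rw [hxny, abs_mul]
      have : (|(n:ℚ)|) ≤ ((B:ℤ):ℚ) := by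
        push_cast [hB]
        have e1 : |(n:ℚ)| * 1 ≤ |(n:ℚ)| * (|y| * (M+1)) :=
          mul_le_mul_of_nonneg_left hge (abs_nonneg _)
        have e2 : (|(n:ℚ)| * |y|) * ((M:ℚ)+1) ≤ ((|x₀.num|:ℤ):ℚ) * ((M:ℚ)+1) := by
          apply mul_le_mul_of_nonneg_right _ (by positivity)
          rw [← habsn]; exact hxled
        push_cast at e2 ⊢
        nlinarith [e1, e2]
      rw [← Int.cast_abs] at this
      exact_mod_cast this
    · field_simp [hxny]; exact hxny
  refine ⟨y.den, ?_, y.den_nz, inv_den_mem A hA hyA⟩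
  have hden1 : |y| * (y.den:ℚ) = ((|y.num| : ℤ) : ℚ) := by
    have := congrArg abs (Rat.mul_den_eq_num y)
    rwa [abs_mul, abs_of_pos (show (0:ℚ) < (y.den:ℚ) by exact_mod_cast y.pos),
      ← Int.cast_abs] at this
  have hynum1 : (1:ℚ) ≤ ((|y.num| : ℤ) : ℚ) := by
    exact_mod_cast Int.one_le_abs (Rat.num_ne_zero.2 hy0)
  have : ((M:ℚ)+1) < (y.den:ℚ) := by nlinarith
  have : (M+1 : ℕ) ≤ y.den := by exact_mod_cast this.le
  omega

lemma infinite_inSet (A : AddSubgroup ℚ) {x : ℚ} (hx : x ∈ A) (hx0 : x ≠ 0)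
    (h : ∀ M : ℕ, ∃ d : ℕ, M ≤ d ∧ d ≠ 0 ∧ ((d:ℚ))⁻¹ ∈ A) :
    (inSetA A x).Infinite := by
  have hnum0 : x.num ≠ 0 := Rat.num_ne_zero.2 hx0
  have key : ∀ M : ℕ, ∃ z ∈ inSetA A x, ∃ d : ℕ, M ≤ d ∧ d ≠ 0 ∧
      |z| * d ≤ ((|x.num| : ℤ) : ℚ) := by
    intro M
    obtain ⟨d, hMd, hd0, hdA⟩ := h (max M (2 * x.den + 1))
    have hMd' : M ≤ d := le_trans (le_max_left _ _) hMd
    have h2d : 2 * x.den + 1 ≤ d := le_trans (le_max_right _ _) hMd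
    obtain ⟨z, n, hzA, hn0, hxz, hnd, hzd⟩ := exists_divisor A hx hx0 hd0 hdA
    have hden : (0:ℤ) < (x.den : ℤ) := Int.natCast_pos.2 x.pos
    have hn2 : 2 ≤ |n| := by
      by_contra hlt
      push_neg at hlt
      have h1 : |n| ≤ 1 := by omega
      have h2 : (d : ℤ) ≤ x.den := le_trans hnd (by nlinarith)
      have h3 : (d : ℕ) ≤ x.den := by exact_mod_cast h2
      omega
    have hzne : z ≠ x := by
      intro hzx
      rw [hzx] at hxz
      have h1 : ((n:ℚ) - 1) * x = 0 := by
        rw [zsmul_eq_mul] at hxz; linear_combination -hxz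
      rcases mul_eq_zero.1 h1 with h2 | h2
      · have h3 : (n:ℚ) = 1 := by linarith
        have h4 : n = 1 := by exact_mod_cast h3
        rw [h4] at hn2; norm_num at hn2
      · exact hx0 h2
    exact ⟨z, ⟨hzA, hzne, n, hn0, hxz⟩, d, hMd', hd0, hzd⟩
  intro hfin
  -- nonempty
  obtain ⟨z₀, hz₀, _⟩ := key 1
  set S : Finset ℚ := hfin.toFinset with hS
  have hz₀S : z₀ ∈ S := hfin.mem_toFinset.2 hz₀
  have hSne : (S.image (fun z => |z|)).Nonempty := ⟨|z₀|, Finset.mem_image_of_mem _ hz₀S⟩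
  set ε : ℚ := (S.image (fun z => |z|)).min' hSne with hε
  have hεmem : ε ∈ S.image (fun z => |z|) := Finset.min'_mem _ _
  obtain ⟨z₁, hz₁S, hz₁ε⟩ := Finset.mem_image.1 hεmem
  have hz₁ : z₁ ∈ inSetA A x := hfin.mem_toFinset.1 hz₁S
  have hz₁0 : z₁ ≠ 0 := by
    obtain ⟨_, _, n, hn0, hxn⟩ := hz₁
    intro hz; apply hx0; rw [hxn, hz, smul_zero]
  have hεpos : (0:ℚ) < ε := by rw [← hz₁ε]; exact abs_pos.2 hz₁0
  obtain ⟨m, hm⟩ := exists_nat_gt (((|x.num| : ℤ) : ℚ) / ε)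
  obtain ⟨z, hzI, d, hmd, hd0, hzd⟩ := key m
  have hzS : z ∈ S := hfin.mem_toFinset.2 hzI
  have hεz : ε ≤ |z| := Finset.min'_le _ _ (Finset.mem_image_of_mem _ hzS)
  have hmε : ((|x.num| : ℤ) : ℚ) < m * ε := by
    rw [div_lt_iff₀ hεpos] at hm; linarith
  have hdm : (m:ℚ) ≤ (d:ℚ) := by exact_mod_cast hmd
  have hdpos : (0:ℚ) < (d:ℚ) := by exact_mod_cast Nat.pos_of_ne_zero hd0
  nlinarith

/-- For a unitary subgroup `A` of `ℚ`: some `x ∈ A` has infinite in-neighbourhood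
iff every nonzero `x ∈ A` has infinite in-neighbourhood. -/
theorem stmt_17 (A : AddSubgroup ℚ) (hA : (1 : ℚ) ∈ A) :
    (∃ x ∈ A, (inSetA A x).Infinite) ↔
      (∀ x ∈ A, x ≠ 0 → (inSetA A x).Infinite) := by
  constructor
  · rintro ⟨x₀, hx₀A, hinf⟩ x hxA hx0
    have hx00 : x₀ ≠ 0 := by
      intro h
      subst h
      have hempty : inSetA A 0 = ∅ := by
        ext y
        simp only [inSetA, Set.mem_setOf_eq, Set.mem_empty_iff_false, iff_false, not_and]
        rintro _ hne ⟨n, hn0, hy⟩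
        apply hne
        rw [zsmul_eq_mul] at hy
        rcases mul_eq_zero.1 hy.symm with h1 | h1
        · exact absurd (by exact_mod_cast h1) hn0
        · rw [h1]
      rw [hempty] at hinf
      exact hinf Set.finite_empty
    exact infinite_inSet A hxA hx0 (fun M => unbounded_inv A hA hx00 hinf M)
  · intro h
    exact ⟨1, hA, h 1 hA one_ne_zero⟩
end

section
/- Let p and q be distinct primes, and for a prime r let G_r = {x ∈ ℚ : r^k · x ∈ ℤ for some natural number k} be the subgroup of the additive group ℚ consisting of rationals whose denominator is a power of r. Define φ : G_p → G_q by φ(0) = 0 and, for x ≠ 0, φ(x) = x · p^(b−a) · q^(a−b), where a is the p-adic valuation of x and b is the q-adic valuation of x (so φ swaps the exponents of p and q in the prime factorization of x). Then φ is a bijection from G_p to G_q, and for all x, y ∈ G_p there is an arc x → y in the directed power graph of G_p if and only if there is an arc φ(x) → φ(y) in the directed power graph of G_q; in particular the directed power graphs of G_p and G_q are isomorphic. -/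
/-- `Gsub r` is the subgroup of `ℚ` consisting of the rationals whose
denominator is a power of `r`, i.e. those `x` with `r^k * x ∈ ℤ` for some `k`. -/
def Gsub (r : ℕ) : AddSubgroup ℚ where
  carrier := {x : ℚ | ∃ k : ℕ, ∃ m : ℤ, (r : ℚ) ^ k * x = (m : ℚ)}
  zero_mem' := ⟨0, 0, by simp⟩
  add_mem' := by
    rintro a b ⟨k, m, hk⟩ ⟨l, n, hl⟩
    refine ⟨k + l, r ^ l * m + r ^ k * n, ?_⟩
    push_cast
    rw [pow_add]
    linear_combination (r : ℚ) ^ l * hk + (r : ℚ) ^ k * hl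
  neg_mem' := by
    rintro a ⟨k, m, hk⟩
    exact ⟨k, -m, by push_cast; linear_combination -hk⟩

/-- The map `φ : G_p → G_q` swapping the exponents of `p` and `q` in the prime
factorization: `φ(0) = 0` and `φ(x) = x * p^(b-a) * q^(a-b)` where `a, b` are the
`p`-adic and `q`-adic valuations of `x`. -/
noncomputable def phiPQ (p q : ℕ) (x : ℚ) : ℚ :=
  if x = 0 then 0
  else x * (p : ℚ) ^ (padicValRat q x - padicValRat p x) *
    (q : ℚ) ^ (padicValRat p x - padicValRat q x)

/-! ### Auxiliary lemmas -/

section Aux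

variable {p q : ℕ}

lemma my_padicValRat_zpow (hp : p.Prime) {c : ℚ} (hc : c ≠ 0) (A : ℤ) :
    padicValRat p (c ^ A) = A * padicValRat p c := by
  haveI := Fact.mk hp
  cases A with
  | ofNat n =>
      rw [Int.ofNat_eq_coe, zpow_natCast, padicValRat.pow c]
  | negSucc n =>
      rw [zpow_negSucc, padicValRat.inv, padicValRat.pow c, Int.negSucc_eq]
      push_cast
      ring

lemma my_padicValRat_int_zero (hp : p.Prime) {u : ℤ} (hpu : ¬(p : ℤ) ∣ u) :
    padicValRat p (u : ℚ) = 0 := by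
  haveI := Fact.mk hp
  rw [padicValRat.of_int, padicValInt.eq_zero_of_not_dvd hpu]
  simp

/-- The `p`-adic valuation of `p^A * q^B * u`. -/
lemma my_val_form (hp : p.Prime) (hq : q.Prime) (hpq : p ≠ q) (A B : ℤ) {u : ℤ}
    (hu : u ≠ 0) (hpu : ¬(p : ℤ) ∣ u) :
    padicValRat p ((p : ℚ) ^ A * (q : ℚ) ^ B * (u : ℚ)) = A := by
  haveI := Fact.mk hp
  have hp0 : (p : ℚ) ≠ 0 := Nat.cast_ne_zero.2 hp.pos.ne'
  have hq0 : (q : ℚ) ≠ 0 := Nat.cast_ne_zero.2 hq.pos.ne'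
  have hu0 : (u : ℚ) ≠ 0 := Int.cast_ne_zero.2 hu
  have hpq' : ¬(p : ℤ) ∣ (q : ℤ) := by
    rw [Int.natCast_dvd_natCast]
    exact fun h => hpq ((Nat.prime_dvd_prime_iff_eq hp hq).1 h)
  have h1 : padicValRat p ((p : ℚ)) = 1 := padicValRat.self hp.one_lt
  have h2 : padicValRat p ((q : ℚ)) = 0 := by
    have := my_padicValRat_int_zero hp hpq'
    simpa using this
  rw [padicValRat.mul (mul_ne_zero (zpow_ne_zero _ hp0) (zpow_ne_zero _ hq0)) hu0,
    padicValRat.mul (zpow_ne_zero _ hp0) (zpow_ne_zero _ hq0),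
    my_padicValRat_zpow hp hp0, my_padicValRat_zpow hp hq0,
    my_padicValRat_int_zero hp hpu, h1, h2]
  ring

/-- `phiPQ` on elements of the form `p^A * q^B * u`. -/
lemma my_phi_form (hp : p.Prime) (hq : q.Prime) (hpq : p ≠ q) (A B : ℤ) {u : ℤ}
    (hu : u ≠ 0) (hpu : ¬(p : ℤ) ∣ u) (hqu : ¬(q : ℤ) ∣ u) :
    phiPQ p q ((p : ℚ) ^ A * (q : ℚ) ^ B * (u : ℚ)) =
      (p : ℚ) ^ B * (q : ℚ) ^ A * (u : ℚ) := by
  have hp0 : (p : ℚ) ≠ 0 := Nat.cast_ne_zero.2 hp.pos.ne'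
  have hq0 : (q : ℚ) ≠ 0 := Nat.cast_ne_zero.2 hq.pos.ne'
  have hu0 : (u : ℚ) ≠ 0 := Int.cast_ne_zero.2 hu
  have hx0 : (p : ℚ) ^ A * (q : ℚ) ^ B * (u : ℚ) ≠ 0 :=
    mul_ne_zero (mul_ne_zero (zpow_ne_zero _ hp0) (zpow_ne_zero _ hq0)) hu0
  have hvp : padicValRat p ((p : ℚ) ^ A * (q : ℚ) ^ B * (u : ℚ)) = A :=
    my_val_form hp hq hpq A B hu hpu
  have hvq : padicValRat q ((p : ℚ) ^ A * (q : ℚ) ^ B * (u : ℚ)) = B := by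
    rw [show (p : ℚ) ^ A * (q : ℚ) ^ B * (u : ℚ)
        = (q : ℚ) ^ B * (p : ℚ) ^ A * (u : ℚ) by ring]
    exact my_val_form hq hp hpq.symm B A hu hqu
  rw [phiPQ, if_neg hx0, hvp, hvq]
  rw [zpow_sub₀ hp0, zpow_sub₀ hq0]
  field_simp

/-- Extract the power of a prime from a nonzero integer, twice. -/
lemma my_int_decomp (hp : p.Prime) (hq : q.Prime) {n : ℤ} (hn : n ≠ 0) :
    ∃ (c d : ℕ) (w : ℤ), w ≠ 0 ∧ ¬(p : ℤ) ∣ w ∧ ¬(q : ℤ) ∣ w ∧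
      n = (p : ℤ) ^ c * (q : ℤ) ^ d * w := by
  have hm : n.natAbs ≠ 0 := Int.natAbs_ne_zero.2 hn
  -- extract the power of p
  set c := n.natAbs.factorization p with hc
  have h1 : p ^ c * (n.natAbs / p ^ c) = n.natAbs :=
    Nat.ordProj_mul_ordCompl_eq_self n.natAbs p
  set t := n.natAbs / p ^ c with ht
  have hpt : ¬ p ∣ t := Nat.not_dvd_ordCompl hp hm
  have ht0 : t ≠ 0 := by
    intro h; rw [h, mul_zero] at h1; exact hm h1.symm
  -- extract the power of q
  set d := t.factorization q with hd
  have h2 : q ^ d * (t / q ^ d) = t := Nat.ordProj_mul_ordCompl_eq_self t q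
  set u := t / q ^ d with hu
  have hqu : ¬ q ∣ u := Nat.not_dvd_ordCompl hq ht0
  have hu0 : u ≠ 0 := by
    intro h; rw [h, mul_zero] at h2; exact ht0 h2.symm
  have hpu : ¬ p ∣ u := by
    intro h
    exact hpt (h.trans ⟨q ^ d, by rw [← h2]; ring⟩)
  have hnat : n.natAbs = p ^ c * (q ^ d * u) := by rw [h2, h1]
  rcases Int.natAbs_eq n with he | he
  · refine ⟨c, d, (u : ℤ), by exact_mod_cast hu0, ?_, ?_, ?_⟩
    · rwa [Int.natCast_dvd_natCast]
    · rwa [Int.natCast_dvd_natCast]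
    · rw [he, hnat]; push_cast; ring
  · refine ⟨c, d, -(u : ℤ), by simpa using (by exact_mod_cast hu0 : (u:ℤ) ≠ 0), ?_, ?_, ?_⟩
    · rw [dvd_neg, Int.natCast_dvd_natCast]; exact hpu
    · rw [dvd_neg, Int.natCast_dvd_natCast]; exact hqu
    · rw [he, hnat]; push_cast; ring

/-- Decomposition of nonzero elements of `Gsub p`. -/
lemma my_decomp (hp : p.Prime) (hq : q.Prime) (hpq : p ≠ q) {x : ℚ}
    (hx : x ∈ Gsub p) (hx0 : x ≠ 0) :
    ∃ (a b : ℤ) (u : ℤ), u ≠ 0 ∧ ¬(p : ℤ) ∣ u ∧ ¬(q : ℤ) ∣ u ∧ 0 ≤ b ∧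
      x = (p : ℚ) ^ a * (q : ℚ) ^ b * (u : ℚ) := by
  obtain ⟨k, m, hk⟩ := hx
  have hp0 : (p : ℚ) ≠ 0 := Nat.cast_ne_zero.2 hp.pos.ne'
  have hm0 : m ≠ 0 := by
    intro h
    rw [h] at hk
    simp only [Int.cast_zero] at hk
    exact hx0 (by
      have := mul_eq_zero.1 hk
      rcases this with h' | h'
      · exact absurd h' (pow_ne_zero _ hp0)
      · exact h')
  obtain ⟨c, d, w, hw0, hpw, hqw, hm⟩ := my_int_decomp hp hq hm0
  refine ⟨(c : ℤ) - k, d, w, hw0, hpw, hqw, Int.ofNat_nonneg d, ?_⟩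
  have hxe : x = (m : ℚ) / (p : ℚ) ^ k := by
    rw [eq_div_iff (pow_ne_zero _ hp0)]
    rw [mul_comm] at hk
    exact hk
  have hmc : (m : ℚ) = (p : ℚ) ^ (c : ℤ) * (q : ℚ) ^ (d : ℤ) * (w : ℚ) := by
    rw [zpow_natCast, zpow_natCast, hm]; push_cast; ring
  rw [hxe, hmc, zpow_sub₀ hp0, zpow_natCast (p : ℚ) k]
  ring

/-- Membership of `p^b * q^a * u` in `Gsub q` when `0 ≤ b`. -/
lemma my_mem_form (hp : p.Prime) (hq : q.Prime) (a b : ℤ) (hb : 0 ≤ b) (u : ℤ) :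
    (p : ℚ) ^ b * (q : ℚ) ^ a * (u : ℚ) ∈ Gsub q := by
  have hq0 : (q : ℚ) ≠ 0 := Nat.cast_ne_zero.2 hq.pos.ne'
  have hqa : (q : ℚ) ^ a ∈ Gsub q := by
    rcases le_or_gt 0 a with ha | ha
    · refine ⟨0, q ^ a.toNat, ?_⟩
      push_cast
      rw [← zpow_natCast (q : ℚ) a.toNat, Int.toNat_of_nonneg ha]
      ring
    · refine ⟨a.natAbs, 1, ?_⟩
      rw [← zpow_natCast (q : ℚ) a.natAbs, ← zpow_add₀ hq0,
        show ((a.natAbs : ℤ) + a = 0) by omega]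
      simp
  have h2 := (Gsub q).zsmul_mem hqa ((p : ℤ) ^ b.toNat * u)
  rw [zsmul_eq_mul] at h2
  have he : (p : ℚ) ^ b * (q : ℚ) ^ a * (u : ℚ)
      = (((p : ℤ) ^ b.toNat * u : ℤ) : ℚ) * (q : ℚ) ^ a := by
    push_cast
    rw [← zpow_natCast (p : ℚ) b.toNat, Int.toNat_of_nonneg hb]
    ring
  rw [he]
  exact h2

/-- Multiplying by a nonzero integer corresponds, under `phiPQ`, to multiplying
by another nonzero integer. -/
lemma my_phi_mul (hp : p.Prime) (hq : q.Prime) (hpq : p ≠ q) (A B : ℤ) {u : ℤ}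
    (hu : u ≠ 0) (hpu : ¬(p : ℤ) ∣ u) (hqu : ¬(q : ℤ) ∣ u) {n : ℤ} (hn : n ≠ 0) :
    ∃ m : ℤ, m ≠ 0 ∧
      phiPQ p q ((n : ℚ) * ((p : ℚ) ^ A * (q : ℚ) ^ B * (u : ℚ))) =
        (m : ℚ) * phiPQ p q ((p : ℚ) ^ A * (q : ℚ) ^ B * (u : ℚ)) := by
  have hp0 : (p : ℚ) ≠ 0 := Nat.cast_ne_zero.2 hp.pos.ne'
  have hq0 : (q : ℚ) ≠ 0 := Nat.cast_ne_zero.2 hq.pos.ne'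
  have hpZ : Prime (p : ℤ) := Nat.prime_iff_prime_int.mp hp
  have hqZ : Prime (q : ℤ) := Nat.prime_iff_prime_int.mp hq
  obtain ⟨c, d, w, hw0, hpw, hqw, hne⟩ := my_int_decomp hp hq hn
  have huw0 : u * w ≠ 0 := mul_ne_zero hu hw0
  have hpuw : ¬(p : ℤ) ∣ u * w := fun h => (hpZ.dvd_mul.1 h).elim hpu hpw
  have hquw : ¬(q : ℤ) ∣ u * w := fun h => (hqZ.dvd_mul.1 h).elim hqu hqw
  have hcomb : (n : ℚ) * ((p : ℚ) ^ A * (q : ℚ) ^ B * (u : ℚ))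
      = (p : ℚ) ^ (A + c) * (q : ℚ) ^ (B + d) * ((u * w : ℤ) : ℚ) := by
    rw [hne, zpow_add₀ hp0, zpow_add₀ hq0, zpow_natCast (p : ℚ) c,
      zpow_natCast (q : ℚ) d]
    push_cast
    ring
  refine ⟨(p : ℤ) ^ d * (q : ℤ) ^ c * w,
    mul_ne_zero (mul_ne_zero (pow_ne_zero _ hpZ.ne_zero) (pow_ne_zero _ hqZ.ne_zero)) hw0, ?_⟩
  rw [hcomb, my_phi_form hp hq hpq (A + c) (B + d) huw0 hpuw hquw,
    my_phi_form hp hq hpq A B hu hpu hqu,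
    zpow_add₀ hp0, zpow_add₀ hq0, zpow_natCast (p : ℚ) d, zpow_natCast (q : ℚ) c]
  push_cast
  ring

end Aux

/-- For distinct primes `p, q`, the map `φ` is a bijection from `G_p` to `G_q`
preserving arcs of the directed power graphs in both directions; in particular
the directed power graphs of `G_p` and `G_q` are isomorphic. -/
theorem stmt_19 (p q : ℕ) (hp : p.Prime) (hq : q.Prime) (hpq : p ≠ q) :
    Set.BijOn (phiPQ p q) (Gsub p : Set ℚ) (Gsub q : Set ℚ) ∧
      (∀ x ∈ Gsub p, ∀ y ∈ Gsub p,
        ((x ≠ y ∧ ∃ n : ℤ, n ≠ 0 ∧ y = n • x) ↔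
          (phiPQ p q x ≠ phiPQ p q y ∧
            ∃ n : ℤ, n ≠ 0 ∧ phiPQ p q y = n • phiPQ p q x))) ∧
      (∃ e : (Gsub p) ≃ (Gsub q),
        ∀ x y : Gsub p, addPowArc x y ↔ addPowArc (e x) (e y)) := by
  have hp0 : (p : ℚ) ≠ 0 := Nat.cast_ne_zero.2 hp.pos.ne'
  have hq0 : (q : ℚ) ≠ 0 := Nat.cast_ne_zero.2 hq.pos.ne'
  have hphi0 : phiPQ p q 0 = 0 := by simp [phiPQ]
  have hmaps : ∀ x ∈ Gsub p, phiPQ p q x ∈ Gsub q := by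
    intro x hx
    by_cases hx0 : x = 0
    · subst hx0; rw [hphi0]; exact (Gsub q).zero_mem
    · obtain ⟨a, b, u, hu, hpu, hqu, hb, rfl⟩ := my_decomp hp hq hpq hx hx0
      rw [my_phi_form hp hq hpq a b hu hpu hqu]
      exact my_mem_form hp hq a b hb u
  have hmaps' : ∀ y ∈ Gsub q, phiPQ p q y ∈ Gsub p := by
    intro y hy
    by_cases hy0 : y = 0
    · subst hy0; rw [hphi0]; exact (Gsub p).zero_mem
    · obtain ⟨a, b, u, hu, hqu, hpu, hb, rfl⟩ := my_decomp hq hp hpq.symm hy hy0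
      rw [show (q : ℚ) ^ a * (p : ℚ) ^ b * (u : ℚ)
          = (p : ℚ) ^ b * (q : ℚ) ^ a * (u : ℚ) from by ring,
        my_phi_form hp hq hpq b a hu hpu hqu]
      have := my_mem_form hq hp a b hb u
      rwa [show (q : ℚ) ^ b * (p : ℚ) ^ a * (u : ℚ)
          = (p : ℚ) ^ a * (q : ℚ) ^ b * (u : ℚ) from by ring] at this
  have hinv : ∀ x ∈ Gsub p, phiPQ p q (phiPQ p q x) = x := by
    intro x hx
    by_cases hx0 : x = 0
    · subst hx0; rw [hphi0, hphi0]
    · obtain ⟨a, b, u, hu, hpu, hqu, hb, rfl⟩ := my_decomp hp hq hpq hx hx0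
      rw [my_phi_form hp hq hpq a b hu hpu hqu, my_phi_form hp hq hpq b a hu hpu hqu]
  have hinv' : ∀ y ∈ Gsub q, phiPQ p q (phiPQ p q y) = y := by
    intro y hy
    by_cases hy0 : y = 0
    · subst hy0; rw [hphi0, hphi0]
    · obtain ⟨a, b, u, hu, hqu, hpu, hb, hyeq⟩ := my_decomp hq hp hpq.symm hy hy0
      rw [show (q : ℚ) ^ a * (p : ℚ) ^ b * (u : ℚ)
          = (p : ℚ) ^ b * (q : ℚ) ^ a * (u : ℚ) from by ring] at hyeq
      rw [hyeq, my_phi_form hp hq hpq b a hu hpu hqu,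
        my_phi_form hp hq hpq a b hu hpu hqu]
  have hbij : Set.BijOn (phiPQ p q) (Gsub p : Set ℚ) (Gsub q : Set ℚ) := by
    refine ⟨hmaps, ?_, ?_⟩
    · intro x hx y hy hxy
      rw [← hinv x hx, ← hinv y hy, hxy]
    · intro y hy
      exact ⟨phiPQ p q y, hmaps' y hy, hinv' y hy⟩
  have harc : ∀ x ∈ Gsub p, ∀ y ∈ Gsub p,
      ((x ≠ y ∧ ∃ n : ℤ, n ≠ 0 ∧ y = n • x) ↔
        (phiPQ p q x ≠ phiPQ p q y ∧
          ∃ n : ℤ, n ≠ 0 ∧ phiPQ p q y = n • phiPQ p q x)) := by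
    intro x hx y hy
    constructor
    · rintro ⟨hxy, n, hn, hyx⟩
      have hx0 : x ≠ 0 := by
        rintro rfl
        exact hxy (by rw [hyx, smul_zero])
      refine ⟨fun h => hxy (by rw [← hinv x hx, ← hinv y hy, h]), ?_⟩
      obtain ⟨a, b, u, hu, hpu, hqu, hb, hxe⟩ := my_decomp hp hq hpq hx hx0
      obtain ⟨m, hm0, hme⟩ := my_phi_mul hp hq hpq a b hu hpu hqu hn
      refine ⟨m, hm0, ?_⟩
      rw [hyx]
      simp only [zsmul_eq_mul]
      rw [hxe]
      exact hme
    · rintro ⟨hxy', n, hn, hyx'⟩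
      have hxy : x ≠ y := by rintro rfl; exact hxy' rfl
      have hx0 : x ≠ 0 := by
        rintro rfl
        rw [hphi0] at hxy' hyx'
        exact hxy' (by rw [hyx', smul_zero])
      refine ⟨hxy, ?_⟩
      have hfx : phiPQ p q x ∈ Gsub q := hmaps x hx
      have hfx0 : phiPQ p q x ≠ 0 := by
        intro h
        exact hx0 (by rw [← hinv x hx, h, hphi0])
      obtain ⟨a, b, u, hu, hqu, hpu, hb, hfe⟩ := my_decomp hq hp hpq.symm hfx hfx0
      rw [show (q : ℚ) ^ a * (p : ℚ) ^ b * (u : ℚ)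
          = (p : ℚ) ^ b * (q : ℚ) ^ a * (u : ℚ) from by ring] at hfe
      obtain ⟨m, hm0, hme⟩ := my_phi_mul hp hq hpq b a hu hpu hqu hn
      refine ⟨m, hm0, ?_⟩
      calc y = phiPQ p q (phiPQ p q y) := (hinv y hy).symm
        _ = phiPQ p q ((n : ℚ) * phiPQ p q x) := by rw [hyx', zsmul_eq_mul]
        _ = (m : ℚ) * phiPQ p q (phiPQ p q x) := by rw [hfe]; exact hme
        _ = (m : ℚ) * x := by rw [hinv x hx]
        _ = (m : ℤ) • x := (zsmul_eq_mul x m).symm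
  have key : ∀ (G : AddSubgroup ℚ) (z w : G), addPowArc z w ↔
      ((z : ℚ) ≠ (w : ℚ) ∧ ∃ n : ℤ, n ≠ 0 ∧ (w : ℚ) = n • (z : ℚ)) := by
    intro G z w
    constructor
    · rintro ⟨h1, n, hn, h2⟩
      exact ⟨fun h => h1 (Subtype.ext h), n, hn, by rw [h2]; rfl⟩
    · rintro ⟨h1, n, hn, h2⟩
      exact ⟨fun h => h1 (congrArg Subtype.val h), n, hn, Subtype.ext (by rw [h2]; rfl)⟩
  refine ⟨hbij, harc, ?_⟩
  have hbijf : Function.Bijective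
      (fun x : Gsub p => (⟨phiPQ p q x, hmaps x x.2⟩ : Gsub q)) := by
    constructor
    · intro x y h
      have h' : phiPQ p q (x : ℚ) = phiPQ p q (y : ℚ) := congrArg Subtype.val h
      exact Subtype.ext (by rw [← hinv x x.2, ← hinv y y.2, h'])
    · intro y
      exact ⟨⟨phiPQ p q y, hmaps' y y.2⟩, Subtype.ext (hinv' y y.2)⟩
  refine ⟨Equiv.ofBijective _ hbijf, ?_⟩
  intro x y
  rw [key (Gsub p) x y, key (Gsub q) _ _]
  exact harc x x.2 y y.2
end
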